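/- Let d ≡ 1 (mod 4) be a positive square-free integer and let ε_d = x + y√d (with x, y ∈ ℤ, x, y > 0) be the fundamental unit of ℚ(√d), and assume its norm is 1, i.e. x² − d·y² = 1 with (x, y) the fundamental solution. Then: (1) neither x + 1 nor x − 1 is a square in ℕ (equivalently, 2ε_d is not a square in ℚ(√d)); and (2) for every prime p dividing d, neither p(x + 1) nor p(x − 1) is a square in ℕ. -/

import Mathlib

noncomputable section

/-- `(x, y)` is the fundamental (minimal) positive solution of the Pell equation
`X² - d Y² = 1`, i.e. the fundamental unit of `ℚ(√d)` is `x + y√d` and has norm `1`. -/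
def IsFundPell (d x y : ℕ) : Prop :=
  0 < x ∧ 0 < y ∧ x ^ 2 = d * y ^ 2 + 1 ∧
    ∀ x' y' : ℕ, 0 < x' → 0 < y' → x' ^ 2 = d * y' ^ 2 + 1 → x ≤ x'

end

lemma aux_v2_eq_one {n : ℕ} (h : n % 4 = 2) : padicValNat 2 n = 1 := by
  obtain ⟨m, rfl⟩ : ∃ m, n = 2 * m := ⟨n / 2, by omega⟩
  rw [padicValNat.mul (by omega) (by omega), padicValNat.self (by norm_num),
    padicValNat.eq_zero_of_not_dvd (by omega)]

lemma aux_not_sq_odd_mul {k n : ℕ} (hk : k % 2 = 1) (hn : 0 < n)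
    (hv : padicValNat 2 n % 2 = 1) : ¬ IsSquare (k * n) := by
  rintro ⟨a, ha⟩
  have ha0 : a ≠ 0 := by
    rintro rfl
    rw [mul_zero] at ha
    rcases Nat.mul_eq_zero.mp ha with h | h <;> omega
  have h1 : padicValNat 2 (k * n) = padicValNat 2 n := by
    rw [padicValNat.mul (by omega) (by omega),
      padicValNat.eq_zero_of_not_dvd (by omega), zero_add]
  have h2 : padicValNat 2 (a * a) = 2 * padicValNat 2 a := by
    rw [padicValNat.mul ha0 ha0]; ring
  rw [ha, h2] at h1
  omega

lemma aux_irr {n : ℕ} (hn : ¬ IsSquare n) {u : ℚ} (h : (u : ℚ) ^ 2 = n) : False := by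
  have h2 : Irrational (Real.sqrt n) := irrational_sqrt_natCast_iff.mpr hn
  apply h2
  refine ⟨|u|, ?_⟩
  have h1 : ((n : ℝ)) = ((u : ℝ)) ^ 2 := by exact_mod_cast h.symm
  rw [h1, Real.sqrt_sq_eq_abs]
  push_cast
  ring

theorem statement0 (d : ℕ) (hd1 : 1 < d) (hdsf : Squarefree d) (hd4 : d % 4 = 1)
    (x y : ℕ) (hxy : IsFundPell d x y) :
    (¬ IsSquare (x + 1) ∧ ¬ IsSquare (x - 1) ∧
      ¬ ∃ u v : ℚ, ((u : ℝ) + (v : ℝ) * Real.sqrt d) ^ 2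
          = 2 * ((x : ℝ) + (y : ℝ) * Real.sqrt d)) ∧
    ∀ p : ℕ, p.Prime → p ∣ d →
      ¬ IsSquare (p * (x + 1)) ∧ ¬ IsSquare (p * (x - 1)) := by
  obtain ⟨hx0, hy0, hx, -⟩ := hxy
  -- x is odd
  have hxodd : x % 2 = 1 := by
    have hzd : (d : ZMod 4) = 1 := by
      rw [← ZMod.natCast_mod d 4, hd4]
      norm_num
    have hzx : (x : ZMod 4) ^ 2 = (y : ZMod 4) ^ 2 + 1 := by
      have h := congrArg (Nat.cast (R := ZMod 4)) hx
      push_cast at h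
      rw [hzd, one_mul] at h
      exact h
    have hval : (x : ZMod 4).val = x % 4 := ZMod.val_natCast 4 x
    have key : ∀ a b : ZMod 4, a ^ 2 = b ^ 2 + 1 → a.val = 1 ∨ a.val = 3 := by decide
    rcases key _ _ hzx with h | h <;> omega
  have hx2 : 2 ≤ x := by nlinarith
  have heq : (x + 1) * (x - 1) = d * y ^ 2 := by
    obtain ⟨m, rfl⟩ : ∃ m, x = m + 1 := ⟨x - 1, by omega⟩
    have h1 : (m + 1) ^ 2 = m * m + 2 * m + 1 := by ring
    have h2 : (m + 1 + 1) * (m + 1 - 1) = m * m + 2 * m := by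
      simp only [Nat.add_sub_cancel]; ring
    omega
  -- both 2-adic valuations are odd
  have hvodd : padicValNat 2 (x + 1) % 2 = 1 ∧ padicValNat 2 (x - 1) % 2 = 1 := by
    have h1 : padicValNat 2 ((x + 1) * (x - 1))
        = padicValNat 2 (x + 1) + padicValNat 2 (x - 1) :=
      padicValNat.mul (by omega) (by omega)
    have h2 : padicValNat 2 (d * y ^ 2) = 2 * padicValNat 2 y := by
      rw [padicValNat.mul (by omega) (pow_ne_zero 2 (by omega)),
        padicValNat.pow y 2, padicValNat.eq_zero_of_not_dvd (by omega), zero_add]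
    have hsum : padicValNat 2 (x + 1) + padicValNat 2 (x - 1) = 2 * padicValNat 2 y := by
      rw [← h1, heq, h2]
    rcases (by omega : (x + 1) % 4 = 2 ∨ (x - 1) % 4 = 2) with h | h <;>
      have := aux_v2_eq_one h <;> omega
  have hA : ¬ IsSquare (x + 1) := by
    have := aux_not_sq_odd_mul (k := 1) (by norm_num) (by omega) hvodd.1
    rwa [one_mul] at this
  have hB : ¬ IsSquare (x - 1) := by
    have := aux_not_sq_odd_mul (k := 1) (by norm_num) (by omega) hvodd.2
    rwa [one_mul] at this
  refine ⟨⟨hA, hB, ?_⟩, ?_⟩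
  · rintro ⟨u, v, huv⟩
    have hdirr : Irrational (Real.sqrt d) := by
      refine irrational_sqrt_natCast_iff.mpr ?_
      rintro ⟨r, hr⟩
      rw [Nat.isUnit_iff.mp (hdsf r (by rw [hr]))] at hr
      simp at hr
      omega
    have hs : (Real.sqrt d) ^ 2 = (d : ℝ) := Real.sq_sqrt (by positivity)
    have key : ((2 * u * v - 2 * y : ℚ) : ℝ) * Real.sqrt d
        = ((2 * x - u ^ 2 - d * v ^ 2 : ℚ) : ℝ) := by
      push_cast
      linear_combination huv - (v : ℝ) ^ 2 * hs
    have hv0 : (2 * u * v - 2 * y : ℚ) = 0 := by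
      by_contra h
      apply hdirr
      refine ⟨(2 * x - u ^ 2 - d * v ^ 2) / (2 * u * v - 2 * y), ?_⟩
      push_cast
      rw [div_eq_iff (by intro h'; apply h; have h'' : ((2 * u * v - 2 * y : ℚ) : ℝ) = 0 := (by push_cast at h' ⊢; linarith); exact_mod_cast h'')]
      push_cast at key
      linarith [key]
    have hA0 : (u ^ 2 + d * v ^ 2 : ℚ) = 2 * x := by
      rw [hv0] at key
      have : ((2 * x - u ^ 2 - d * v ^ 2 : ℚ) : ℝ) = 0 := by
        rw [← key]; push_cast; ring
      have h2 : (2 * x - u ^ 2 - d * v ^ 2 : ℚ) = 0 := by exact_mod_cast this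
      linarith
    have hB0 : (u * v : ℚ) = y := by linarith [hv0]
    have hxq : (x : ℚ) ^ 2 = d * y ^ 2 + 1 := by exact_mod_cast hx
    have h4 : (u ^ 2 - d * v ^ 2 : ℚ) ^ 2 = 4 := by
      linear_combination (u ^ 2 + d * v ^ 2 + 2 * (x : ℚ)) * hA0
        - 4 * (d : ℚ) * (u * v + y) * hB0 + 4 * hxq
    have h5 : (u ^ 2 - d * v ^ 2 : ℚ) = 2 ∨ (u ^ 2 - d * v ^ 2 : ℚ) = -2 := by
      have : ((u ^ 2 - d * v ^ 2 : ℚ) - 2) * ((u ^ 2 - d * v ^ 2 : ℚ) + 2) = 0 := by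
        linear_combination h4
      rcases mul_eq_zero.mp this with h | h
      · left; linarith
      · right; linarith
    rcases h5 with h | h
    · exact aux_irr hA (n := x + 1) (u := u) (by push_cast; linarith)
    · refine aux_irr hB (n := x - 1) (u := u) ?_
      have hc : ((x - 1 : ℕ) : ℚ) = (x : ℚ) - 1 := by
        have : 1 ≤ x := by omega
        push_cast [this]
        ring
      rw [hc]; linarith
  · intro p hp hpd
    have hpodd : p % 2 = 1 := by
      have h2 : ¬ 2 ∣ p := fun h => by
        have : (2:ℕ) ∣ d := h.trans hpd
        omega
      have := hp.two_le
      omega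
    exact ⟨aux_not_sq_odd_mul hpodd (by omega) hvodd.1,
      aux_not_sq_odd_mul hpodd (by omega) hvodd.2⟩
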